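/- Let D = diag(d₁,…,dₙ) be a real diagonal matrix and M an n×n matrix with entries in {0,1} with at most one 1 per row. If every dᵢ satisfies |dᵢ| > 1, then det(D − M) ≠ 0. -/

import Mathlib

theorem det_diagonal_sub_zero_one_matrix_ne_zero {n : ℕ} (d : Fin n → ℝ)
    (M : Matrix (Fin n) (Fin n) ℝ)
    (hM01 : ∀ i j, M i j = 0 ∨ M i j = 1)
    (hMrow : ∀ i, (Finset.univ.filter (fun j => M i j = 1)).card ≤ 1)
    (hd : ∀ i, 1 < |d i|) :
    (Matrix.diagonal d - M).det ≠ 0 := by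
  rw [Ne, ← Matrix.exists_mulVec_eq_zero_iff]
  rintro ⟨v, hv, hmul⟩
  obtain ⟨k, hk⟩ := Function.ne_iff.mp hv
  obtain ⟨i, -, hi⟩ := Finset.exists_max_image Finset.univ (fun j => |v j|)
    ⟨k, Finset.mem_univ k⟩
  have hvi : 0 < |v i| := lt_of_lt_of_le (abs_pos.mpr hk) (hi k (Finset.mem_univ k))
  have heq : d i * v i - ∑ j, M i j * v j = 0 := by
    have := congrFun hmul i
    rw [Matrix.sub_mulVec] at this
    simpa [Matrix.mulVec, dotProduct, Pi.sub_apply,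
      Matrix.diagonal_apply, ite_mul, Finset.sum_ite_eq] using this
  have hsum : ∑ j, M i j * v j = ∑ j ∈ Finset.univ.filter (fun j => M i j = 1), v j := by
    rw [Finset.sum_filter]
    refine Finset.sum_congr rfl fun j _ => ?_
    rcases hM01 i j with h | h <;> simp [h]
  rw [hsum] at heq
  set s := Finset.univ.filter (fun j => M i j = 1) with hs
  rcases s.eq_empty_or_nonempty with he | hne
  · rw [he] at heq
    simp only [Finset.sum_empty, sub_zero, mul_eq_zero] at heq
    rcases heq with h | h
    · have := hd i; rw [h] at this; simp at this; linarith
    · rw [h] at hvi; simp at hvi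
  · have hcard : s.card = 1 := le_antisymm (hMrow i) (Finset.card_pos.mpr hne)
    obtain ⟨j₀, hj₀⟩ := Finset.card_eq_one.mp hcard
    rw [hj₀, Finset.sum_singleton, sub_eq_zero] at heq
    have h1 : |v i| < |d i| * |v i| := lt_mul_of_one_lt_left hvi (hd i)
    have h2 : |d i * v i| = |v j₀| := by rw [heq]
    rw [abs_mul] at h2
    have := hi j₀ (Finset.mem_univ j₀)
    linarith
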